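/- The norms h_n(z) of the monic truncated Hermite polynomials satisfy h_n'(z)·h_{n−1}'(z) = (n·h_{n−1}(z) − 2·h_n(z))² for all n ≥ 1 and z > 0. -/

import Mathlib

open Polynomial

/-- The truncated Hermite linear functional `L[p] = ∫_{-z}^{z} p(x) e^{-x²} dx`. -/
noncomputable def truncL (z : ℝ) (p : Polynomial ℝ) : ℝ :=
  ∫ x in (-z)..z, p.eval x * Real.exp (-x ^ 2)

section Aux
open intervalIntegral MeasureTheory

lemma truncL_cont (p : Polynomial ℝ) : Continuous fun x : ℝ => p.eval x * Real.exp (-x ^ 2) :=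
  (p.continuous).mul (Real.continuous_exp.comp (continuous_pow 2).neg)

lemma truncL_ii (z : ℝ) (p : Polynomial ℝ) :
    IntervalIntegrable (fun x : ℝ => p.eval x * Real.exp (-x ^ 2)) volume (-z) z :=
  (truncL_cont p).intervalIntegrable _ _

lemma truncL_add (z : ℝ) (p q : Polynomial ℝ) :
    truncL z (p + q) = truncL z p + truncL z q := by
  unfold truncL
  rw [← intervalIntegral.integral_add (truncL_ii z p) (truncL_ii z q)]
  simp [add_mul]

lemma truncL_C_mul (z : ℝ) (a : ℝ) (p : Polynomial ℝ) :
    truncL z (C a * p) = a * truncL z p := by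
  unfold truncL
  rw [← intervalIntegral.integral_const_mul]
  simp [mul_assoc]

lemma truncL_zero (z : ℝ) : truncL z 0 = 0 := by simp [truncL]

lemma truncL_sub (z : ℝ) (p q : Polynomial ℝ) :
    truncL z (p - q) = truncL z p - truncL z q := by
  have := truncL_add z (p - q) q
  simp at this; linarith

lemma truncL_sq_nonneg {z : ℝ} (hz : 0 < z) (p : Polynomial ℝ) : 0 ≤ truncL z (p * p) := by
  apply intervalIntegral.integral_nonneg (by linarith)
  intro x _
  simp only [eval_mul]
  exact mul_nonneg (mul_self_nonneg _) (Real.exp_pos _).le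

lemma truncL_sq_pos {z : ℝ} (hz : 0 < z) {p : Polynomial ℝ} (hp : p ≠ 0) :
    0 < truncL z (p * p) := by
  rw [truncL]
  rw [intervalIntegral.integral_pos_iff_support_of_nonneg_ae]
  · refine ⟨by linarith, ?_⟩
    have hroots : (volume : Measure ℝ) {x | p.IsRoot x} = 0 :=
      (Polynomial.finite_setOf_isRoot hp).measure_zero _
    have hsub : Set.Ioc (-z) z \ {x | p.IsRoot x} ⊆
        Function.support (fun x => eval x (p*p) * Real.exp (-x ^ 2)) ∩ Set.Ioc (-z) z := by
      rintro x ⟨hx1, hx2⟩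
      refine ⟨?_, hx1⟩
      simp only [Function.mem_support, eval_mul]
      have hx : eval x p ≠ 0 := hx2
      exact ne_of_gt (mul_pos (mul_self_pos.mpr hx) (Real.exp_pos _))
    calc (0:ENNReal) < volume (Set.Ioc (-z) z \ {x | p.IsRoot x}) := by
          rw [measure_diff_null hroots, Real.volume_Ioc]
          simp only [ENNReal.ofReal_pos]
          linarith
      _ ≤ _ := measure_mono hsub
  · filter_upwards with x
    simp only [eval_mul, Pi.zero_apply]
    exact mul_nonneg (mul_self_nonneg _) (Real.exp_pos _).le
  · exact truncL_ii _ _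

section Orth

variable {P : ℝ → ℕ → Polynomial ℝ}
variable (hmonic : ∀ z n, (P z n).Monic) (hdeg : ∀ z n, (P z n).natDegree = n)
variable (horth : ∀ z, 0 < z → ∀ m n, m ≠ n → truncL z (P z m * P z n) = 0)

include hmonic hdeg horth in
lemma orth_lt {z : ℝ} (hz : 0 < z) (n : ℕ) (q : Polynomial ℝ) (hq : q.degree < (n : ℕ)) :
    truncL z (q * P z n) = 0 := by
  have key : ∀ d : ℕ, ∀ q : Polynomial ℝ, q.natDegree < d → q.degree < (n : ℕ) →
      truncL z (q * P z n) = 0 := by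
    intro d
    induction d with
    | zero => exact fun q h _ => absurd h (Nat.not_lt_zero _)
    | succ d ih =>
      intro q hqd hqn
      rcases eq_or_ne q 0 with rfl | hq0
      · rw [zero_mul]; exact truncL_zero z
      · set m := q.natDegree with hm
        set c := q.leadingCoeff with hc
        have hPm := hmonic z m
        have hPmdeg : (P z m).degree = (m : ℕ) := by
          rw [Polynomial.degree_eq_natDegree hPm.ne_zero, hdeg]
        have hqdeg : q.degree = (m : ℕ) := Polynomial.degree_eq_natDegree hq0
        have hmn : m ≠ n := by
          intro h
          rw [hqdeg, h] at hqn
          exact lt_irrefl _ hqn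
        have hc0 : c ≠ 0 := Polynomial.leadingCoeff_ne_zero.mpr hq0
        set r := q - C c * P z m with hr
        have hsplit : q * P z n = r * P z n + C c * (P z m * P z n) := by
          rw [hr]; ring
        have hrd : r.degree < q.degree := by
          apply Polynomial.degree_sub_lt _ hq0
          · rw [Polynomial.leadingCoeff_mul, Polynomial.leadingCoeff_C, hPm.leadingCoeff,
              mul_one]
          · rw [Polynomial.degree_mul, Polynomial.degree_C hc0, zero_add, hPmdeg, hqdeg]
        have h1 : truncL z (r * P z n) = 0 := by
          rcases eq_or_ne r 0 with h | h
          · rw [h, zero_mul]; exact truncL_zero z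
          · exact ih r (lt_of_lt_of_le (Polynomial.natDegree_lt_natDegree h hrd)
              (Nat.lt_succ_iff.mp hqd)) (hrd.trans hqn)
        rw [hsplit, truncL_add, h1, truncL_C_mul, horth z hz m n hmn, mul_zero, add_zero]
  exact key (q.natDegree + 1) q (Nat.lt_succ_self _) hq

end Orth

lemma truncL_comp_neg (z : ℝ) (p : Polynomial ℝ) :
    truncL z (p.comp (-X)) = truncL z p := by
  unfold truncL
  have h1 : ∀ x : ℝ, eval x (p.comp (-X)) * Real.exp (-x ^ 2)
      = eval (-x) p * Real.exp (-(-x) ^ 2) := by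
    intro x
    simp [Polynomial.eval_comp, neg_sq]
  simp_rw [h1]
  rw [intervalIntegral.integral_comp_neg (fun x => eval x p * Real.exp (-x ^ 2)), neg_neg]

section Parity

variable {P : ℝ → ℕ → Polynomial ℝ}
variable (hmonic : ∀ z n, (P z n).Monic) (hdeg : ∀ z n, (P z n).natDegree = n)
variable (horth : ∀ z, 0 < z → ∀ m n, m ≠ n → truncL z (P z m * P z n) = 0)

include hmonic hdeg horth in
lemma parity_comp {z : ℝ} (hz : 0 < z) (n : ℕ) :
    (P z n).comp (-X) = C ((-1 : ℝ) ^ n) * P z n := by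
  set p := P z n with hp
  have hp0 : p ≠ 0 := (hmonic z n).ne_zero
  have hXdeg : (-X : Polynomial ℝ).natDegree = 1 := by
    rw [Polynomial.natDegree_neg, Polynomial.natDegree_X]
  have hcompdeg : (p.comp (-X)).natDegree = n := by
    rw [Polynomial.natDegree_comp, hXdeg, mul_one, hp, hdeg]
  have hcomplead : (p.comp (-X)).leadingCoeff = (-1 : ℝ) ^ n := by
    rw [Polynomial.leadingCoeff_comp (by rw [hXdeg]; exact one_ne_zero), (hmonic z n).leadingCoeff,
      one_mul]
    have h1 : (-X : Polynomial ℝ).leadingCoeff = -1 := by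
      rw [Polynomial.leadingCoeff_neg, Polynomial.leadingCoeff_X]
    rw [h1, hp, hdeg]
  have hsq : ((-1 : ℝ) ^ n) * ((-1 : ℝ) ^ n) = 1 := by
    rw [← mul_pow, neg_mul_neg, one_mul, one_pow]
  have hcomp0 : p.comp (-X) ≠ 0 := by
    intro h
    rw [h, Polynomial.leadingCoeff_zero] at hcomplead
    have : ((-1 : ℝ) ^ n) ≠ 0 := by
      intro h'; rw [h'] at hsq; simpa using hsq
    exact this hcomplead.symm
  set Q := C ((-1 : ℝ) ^ n) * p.comp (-X) with hQ
  have hQlead : Q.leadingCoeff = 1 := by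
    rw [hQ, Polynomial.leadingCoeff_mul, Polynomial.leadingCoeff_C, hcomplead, hsq]
  have hQ0 : Q ≠ 0 := by
    intro h
    rw [h, Polynomial.leadingCoeff_zero] at hQlead
    exact one_ne_zero hQlead.symm
  have hC0 : ((-1 : ℝ) ^ n) ≠ 0 := by
    intro h'; rw [h'] at hsq; simpa using hsq
  have hQdeg : Q.degree = (n : ℕ) := by
    rw [hQ, Polynomial.degree_mul, Polynomial.degree_C hC0, zero_add,
      Polynomial.degree_eq_natDegree hcomp0, hcompdeg]
  have hpdeg : p.degree = (n : ℕ) := by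
    rw [Polynomial.degree_eq_natDegree hp0, hp, hdeg]
  -- r := Q - p has degree < n
  set r := Q - p with hr
  have hrQ : r = Q - p := hr
  rcases eq_or_ne r 0 with hr0 | hr0
  · have hQp : Q = p := by rwa [sub_eq_zero] at hr0
    have h5 : C ((-1 : ℝ) ^ n) * Q = C ((-1 : ℝ) ^ n) * p := by rw [hQp]
    rwa [hQ, ← mul_assoc, ← map_mul, hsq, map_one, one_mul] at h5
  · exfalso
    have hrdeg : r.degree < (n : ℕ) := by
      have h4 := Polynomial.degree_sub_lt (hQdeg.trans hpdeg.symm) hQ0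
        (hQlead.trans (hmonic z n).leadingCoeff.symm)
      rw [hQdeg] at h4
      exact h4
    have h1 : truncL z (r * p) = 0 := orth_lt hmonic hdeg horth hz n r hrdeg
    have h2 : truncL z (r * Q) = 0 := by
      rw [hQ, mul_left_comm, truncL_C_mul]
      have hcc : ((r.comp (-X)) * p).comp (-X) = r * p.comp (-X) := by
        rw [Polynomial.mul_comp, Polynomial.comp_assoc, Polynomial.neg_comp, Polynomial.X_comp,
          neg_neg, Polynomial.comp_X]
      rw [← hcc, truncL_comp_neg]
      have hrcdeg : (r.comp (-X)).degree < (n : ℕ) := by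
        rcases eq_or_ne (r.comp (-X)) 0 with h | h
        · rw [h, Polynomial.degree_zero]
          exact WithBot.bot_lt_coe _
        · rw [Polynomial.degree_eq_natDegree h, Polynomial.natDegree_comp, hXdeg, mul_one,
            ← Polynomial.degree_eq_natDegree hr0]
          exact hrdeg
      rw [orth_lt hmonic hdeg horth hz n _ hrcdeg, mul_zero]
    have hrr : truncL z (r * r) = 0 := by
      have : r * r = r * Q - r * p := by rw [hr]; ring
      rw [this, truncL_sub, h1, h2, sub_zero]
    exact absurd hrr (ne_of_gt (truncL_sq_pos hz hr0))

include hmonic hdeg horth in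
lemma parity_eval {z : ℝ} (hz : 0 < z) (n : ℕ) (x : ℝ) :
    eval (-x) (P z n) = (-1 : ℝ) ^ n * eval x (P z n) := by
  have h := parity_comp hmonic hdeg horth hz n
  have h2 := congrArg (eval x) h
  rwa [Polynomial.eval_comp, Polynomial.eval_neg, Polynomial.eval_X, Polynomial.eval_mul,
    Polynomial.eval_C] at h2

end Parity

section Deriv

variable {P : ℝ → ℕ → Polynomial ℝ} {h : ℕ → ℝ → ℝ}
variable (hmonic : ∀ z n, (P z n).Monic) (hdeg : ∀ z n, (P z n).natDegree = n)
variable (horth : ∀ z, 0 < z → ∀ m n, m ≠ n → truncL z (P z m * P z n) = 0)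
variable (hh : ∀ n z, h n z = truncL z (P z n * P z n))
variable (hdiff : ∀ n z, 0 < z → DifferentiableAt ℝ (h n) z)

include hmonic hdeg horth in
lemma trunc_min {z : ℝ} (hz : 0 < z) (n : ℕ) (q : Polynomial ℝ) (hq : q.Monic)
    (hqd : q.natDegree = n) : truncL z (P z n * P z n) ≤ truncL z (q * q) := by
  set r := q - P z n with hr
  have hpdeg : (P z n).degree = (n : ℕ) := by
    rw [Polynomial.degree_eq_natDegree (hmonic z n).ne_zero, hdeg]
  have hqdeg : q.degree = (n : ℕ) := by
    rw [Polynomial.degree_eq_natDegree hq.ne_zero, hqd]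
  rcases eq_or_ne r 0 with hr0 | hr0
  · have : q = P z n := by rwa [sub_eq_zero] at hr0
    rw [this]
  · have hrdeg : r.degree < (n : ℕ) := by
      have h4 := Polynomial.degree_sub_lt (hqdeg.trans hpdeg.symm) hq.ne_zero
        (hq.leadingCoeff.trans (hmonic z n).leadingCoeff.symm)
      rw [hqdeg] at h4
      exact h4
    have hsplit : q * q = P z n * P z n + ((r * P z n + r * P z n) + r * r) := by
      rw [hr]; ring
    rw [hsplit, truncL_add, truncL_add, truncL_add,
      orth_lt hmonic hdeg horth hz n r hrdeg]
    have := truncL_sq_nonneg hz r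
    linarith

include hmonic hdeg horth hh hdiff in
lemma deriv_h {z₀ : ℝ} (hz₀ : 0 < z₀) (n : ℕ) :
    deriv (h n) z₀ = 2 * (eval z₀ (P z₀ n)) ^ 2 * Real.exp (-z₀ ^ 2) := by
  set f : ℝ → ℝ := fun x => eval x (P z₀ n * P z₀ n) * Real.exp (-x ^ 2) with hf
  have hfc : Continuous f := truncL_cont _
  set F : ℝ → ℝ := fun z => ∫ x in (0 : ℝ)..z, f x with hF
  set G : ℝ → ℝ := fun z => F z - F (-z) with hGdef
  have hG : ∀ z : ℝ, truncL z (P z₀ n * P z₀ n) = G z := by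
    intro z
    rw [truncL, hGdef]
    show _ = F z - F (-z)
    rw [hF]
    rw [← intervalIntegral.integral_add_adjacent_intervals (b := (0 : ℝ))
      ((hfc.intervalIntegrable _ _)) ((hfc.intervalIntegrable _ _)),
      intervalIntegral.integral_symm]
    ring
  have hG' : HasDerivAt G (f z₀ + f (-z₀)) z₀ := by
    have h1 : HasDerivAt F (f z₀) z₀ := (hfc.integral_hasStrictDerivAt 0 z₀).hasDerivAt
    have h2 : HasDerivAt (fun z : ℝ => F (-z)) (-(f (-z₀))) z₀ := by
      have h3 := ((hfc.integral_hasStrictDerivAt 0 (-z₀)).hasDerivAt).comp z₀ (hasDerivAt_neg z₀)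
      rw [mul_neg_one] at h3
      exact h3
    have h4 := h1.sub h2
    rw [sub_neg_eq_add] at h4
    exact h4
  have hfeq : f (-z₀) = f z₀ := by
    rw [hf]
    simp only [Polynomial.eval_mul, neg_sq]
    rw [parity_eval hmonic hdeg horth hz₀ n z₀]
    have h6 : ((-1 : ℝ)) ^ (n * 2) = 1 := by
      rw [mul_comm, pow_mul, neg_one_sq, one_pow]
    ring_nf
    rw [h6]
    ring
  have hle : ∀ z : ℝ, 0 < z → h n z ≤ G z := by
    intro z hz
    rw [hh, ← hG]
    exact trunc_min hmonic hdeg horth hz n (P z₀ n) (hmonic z₀ n) (hdeg z₀ n)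
  have heq : h n z₀ = G z₀ := by rw [hh, hG]
  have hmin : IsLocalMin (fun z => G z - h n z) z₀ := by
    have hev : ∀ᶠ z in nhds z₀, (fun z => G z - h n z) z₀ ≤ G z - h n z := by
      filter_upwards [isOpen_Ioi.mem_nhds hz₀] with z hz
      have h5 := hle z hz
      simp only [heq]
      linarith [heq]
    exact hev
  have hd0 := hmin.deriv_eq_zero
  rw [deriv_fun_sub hG'.differentiableAt (hdiff n z₀ hz₀), hG'.deriv] at hd0
  have : deriv (h n) z₀ = f z₀ + f (-z₀) := by linarith
  rw [this, hfeq, hf]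
  simp only [Polynomial.eval_mul]
  ring

end Deriv

section StringEq

variable {P : ℝ → ℕ → Polynomial ℝ} {γ : ℕ → ℝ → ℝ}
variable (hmonic : ∀ z n, (P z n).Monic) (hdeg : ∀ z n, (P z n).natDegree = n)
variable (horth : ∀ z, 0 < z → ∀ m n, m ≠ n → truncL z (P z m * P z n) = 0)
variable (hP0 : ∀ z, P z 0 = 1) (hP1 : ∀ z, P z 1 = X)
variable (hrec : ∀ z, 0 < z → ∀ n, X * P z (n + 1) = P z (n + 2) + C (γ (n + 1) z) * P z n)

include horth hP0 hP1 hrec in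
lemma trunc_X_mul {z : ℝ} (hz : 0 < z) (m : ℕ) :
    truncL z (X * (P z (m + 1) * P z m)) = truncL z (P z (m + 1) * P z (m + 1)) := by
  have hmul : X * (P z (m + 1) * P z m) = (X * P z m) * P z (m + 1) := by ring
  rcases Nat.eq_zero_or_pos m with rfl | hm
  · rw [hmul, hP0, mul_one, ← hP1 z]
  · obtain ⟨k, rfl⟩ : ∃ k, m = k + 1 := ⟨m - 1, by omega⟩
    have hrk := hrec z hz k
    rw [show k + 2 = (k + 1) + 1 from rfl] at hrk
    rw [hmul, hrk]
    have hsplit : (P z (k + 1 + 1) + C (γ (k + 1) z) * P z k) * P z (k + 1 + 1)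
        = P z (k + 1 + 1) * P z (k + 1 + 1) + C (γ (k + 1) z) * (P z k * P z (k + 1 + 1)) := by
      ring
    rw [hsplit, truncL_add, truncL_C_mul, horth z hz k (k + 1 + 1) (by omega), mul_zero, add_zero]

include hmonic hdeg horth hP0 hP1 hrec in
lemma string_eq {z : ℝ} (hz : 0 < z) (m : ℕ) :
    ((m : ℝ) + 1) * truncL z (P z m * P z m) - 2 * truncL z (P z (m + 1) * P z (m + 1))
      = 2 * eval z (P z (m + 1)) * eval z (P z m) * Real.exp (-z ^ 2) := by
  set p := P z (m + 1) with hp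
  set q := P z m with hq
  set R : Polynomial ℝ := derivative (p * q) - C 2 * (X * (p * q)) with hR
  -- FTC
  have hftc : truncL z R = eval z (p * q) * Real.exp (-z ^ 2)
      - eval (-z) (p * q) * Real.exp (-(-z) ^ 2) := by
    rw [truncL]
    apply intervalIntegral.integral_eq_sub_of_hasDerivAt
      (f := fun x => eval x (p * q) * Real.exp (-x ^ 2))
    · intro x _
      have h1 := (p * q).hasDerivAt x
      have h2 : HasDerivAt (fun y : ℝ => Real.exp (-y ^ 2)) (Real.exp (-x ^ 2) * -(2 * x)) x := by
        have h3 : HasDerivAt (fun y : ℝ => -y ^ 2) (-(2 * x)) x := by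
          have := (hasDerivAt_pow 2 x).neg
          exact this.congr_deriv (by simp)
        exact h3.exp
      have h4 := h1.mul h2
      refine h4.congr_deriv ?_
      rw [hR]
      simp only [Polynomial.eval_sub, Polynomial.eval_mul, Polynomial.eval_C, Polynomial.eval_X]
      ring
    · exact truncL_ii z R
  -- boundary value
  have hbd : truncL z R = 2 * eval z p * eval z q * Real.exp (-z ^ 2) := by
    rw [hftc]
    simp only [Polynomial.eval_mul, neg_sq]
    rw [hp, hq, parity_eval hmonic hdeg horth hz (m + 1) z, parity_eval hmonic hdeg horth hz m z]
    have key : ((-1 : ℝ)) ^ (m + 1) * ((-1 : ℝ)) ^ m = -1 := by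
      rw [← pow_add]
      exact Odd.neg_one_pow ⟨m, by omega⟩
    linear_combination (-(eval z (P z (m + 1)) * eval z (P z m) * Real.exp (-z ^ 2))) * key
  -- expansion of truncL z R
  have hqd0 : q ≠ 0 := (hmonic z m).ne_zero
  have hqdeg : q.degree = (m : ℕ) := by
    rw [Polynomial.degree_eq_natDegree hqd0, hq, hdeg]
  -- (i)
  have hi : truncL z (p * derivative q) = 0 := by
    rw [mul_comm]
    apply orth_lt hmonic hdeg horth hz (m + 1)
    calc (derivative q).degree < q.degree := Polynomial.degree_derivative_lt hqd0
      _ = (m : ℕ) := hqdeg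
      _ < ((m + 1 : ℕ) : ℕ) := by exact_mod_cast Nat.lt_succ_self m
  -- (ii)
  have hii : truncL z (derivative p * q) = ((m : ℝ) + 1) * truncL z (q * q) := by
    set s := derivative p - C ((m : ℝ) + 1) * q with hs
    have hsd : s.degree < (m : ℕ) := by
      rw [Polynomial.degree_lt_iff_coeff_zero]
      intro k hk
      rw [hs, Polynomial.coeff_sub, Polynomial.coeff_C_mul, Polynomial.coeff_derivative]
      rcases eq_or_lt_of_le hk with heq | hk'
      · have hc1 : p.coeff (k + 1) = 1 := by
          rw [hp, ← heq]
          have hcn := (hmonic z (m + 1)).coeff_natDegree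
          rwa [hdeg] at hcn
        have hc2 : q.coeff k = 1 := by
          rw [hq, ← heq]
          have hcn := (hmonic z m).coeff_natDegree
          rwa [hdeg] at hcn
        rw [hc1, hc2, ← heq]
        ring
      · have hc1 : p.coeff (k + 1) = 0 := by
          apply Polynomial.coeff_eq_zero_of_natDegree_lt
          rw [hp, hdeg]
          omega
        have hc2 : q.coeff k = 0 := by
          apply Polynomial.coeff_eq_zero_of_natDegree_lt
          rw [hq, hdeg]
          omega
        rw [hc1, hc2]
        ring
    have hsplit : derivative p * q = s * q + C ((m : ℝ) + 1) * (q * q) := by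
      rw [hs]; ring
    rw [hsplit, truncL_add, truncL_C_mul, orth_lt hmonic hdeg horth hz m s hsd, zero_add]
  -- (iii)
  have hiii : truncL z (X * (p * q)) = truncL z (p * p) :=
    trunc_X_mul horth hP0 hP1 hrec hz m
  -- combine
  have hRsplit : R = derivative p * q + p * derivative q - C 2 * (X * (p * q)) := by
    rw [hR, Polynomial.derivative_mul]
  have hRval : truncL z R = ((m : ℝ) + 1) * truncL z (q * q) - 2 * truncL z (p * p) := by
    rw [hRsplit, truncL_sub, truncL_add, truncL_C_mul, hi, hii, hiii, add_zero]
  rw [← hRval]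
  exact hbd

end StringEq

end Aux

theorem truncated_hermite_h_deriv_product (P : ℝ → ℕ → Polynomial ℝ) (γ h : ℕ → ℝ → ℝ)
    (hmonic : ∀ z n, (P z n).Monic) (hdeg : ∀ z n, (P z n).natDegree = n)
    (horth : ∀ z, 0 < z → ∀ m n, m ≠ n → truncL z (P z m * P z n) = 0)
    (hP0 : ∀ z, P z 0 = 1) (hP1 : ∀ z, P z 1 = X)
    (hrec : ∀ z, 0 < z → ∀ n, X * P z (n + 1) = P z (n + 2) + C (γ (n + 1) z) * P z n)
    (hh : ∀ n z, h n z = truncL z (P z n * P z n))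
    (hdiff : ∀ n z, 0 < z → DifferentiableAt ℝ (h n) z) :
    ∀ n : ℕ, 1 ≤ n → ∀ z : ℝ, 0 < z →
      deriv (h n) z * deriv (h (n - 1)) z = ((n : ℝ) * h (n - 1) z - 2 * h n z) ^ 2 := by
  intro n hn z hz
  obtain ⟨m, rfl⟩ : ∃ m, n = m + 1 := ⟨n - 1, by omega⟩
  have hsub : m + 1 - 1 = m := rfl
  rw [hsub, deriv_h hmonic hdeg horth hh hdiff hz (m + 1), deriv_h hmonic hdeg horth hh hdiff hz m,
    hh (m + 1) z, hh m z]
  have hs := string_eq hmonic hdeg horth hP0 hP1 hrec hz m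
  push_cast
  rw [hs]
  ring
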